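/- Let d ≥ 1, k ≥ 1, let V be a complex inner product space, and let Φ_{A,a} (A ∈ Fin k, a ∈ Fin d) be vectors in V satisfying the MUB Gram condition ⟨Φ_{A,a}, Φ_{A',a'}⟩ = δ_{A,A'}δ_{a,a'} + (1−δ_{A,A'})/d. Then the dimension of the linear span of {Φ_{A,a} : A ∈ Fin k, a ∈ Fin d} equals k·(d−1) + 1. -/

import Mathlib

open scoped InnerProductSpace

/-- **Dimension of the span of the post-measurement states.** Vectors `Φ_{A,a}`
satisfying the MUB Gram condition span a subspace of dimension `k(d-1) + 1`. -/
theorem finrank_span_of_mub_gram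
    (d k : ℕ) (hd : 1 ≤ d) (hk : 1 ≤ k)
    (V : Type*) [NormedAddCommGroup V] [InnerProductSpace ℂ V]
    (Φ : Fin k → Fin d → V)
    (hGram : ∀ (A A' : Fin k) (a a' : Fin d),
      ⟪Φ A a, Φ A' a'⟫_ℂ =
        if A = A' then (if a = a' then 1 else 0) else 1 / (d : ℂ)) :
    Module.finrank ℂ
      (Submodule.span ℂ (Set.range (fun p : Fin k × Fin d => Φ p.1 p.2)))
      = k * (d - 1) + 1 := by
  classical
  have hd0 : (d : ℂ) ≠ 0 := Nat.cast_ne_zero.mpr (by omega)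
  set A0 : Fin k := ⟨0, hk⟩ with hA0
  set emb : Fin (d-1) → Fin d :=
    fun b => ⟨b.val, lt_of_lt_of_le b.isLt (Nat.sub_le d 1)⟩ with hembdef
  have hemb_inj : Function.Injective emb := by
    intro x y h
    have h2 : (emb x).val = (emb y).val := congrArg Fin.val h
    exact Fin.ext h2
  -- inner products with the sums
  have L1 : ∀ (A B : Fin k) (a : Fin d), ⟪Φ A a, ∑ b, Φ B b⟫_ℂ = 1 := by
    intro A B a
    rw [inner_sum]
    by_cases h : A = B
    · subst h
      simp [hGram, Finset.sum_ite_eq]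
    · simp [hGram, h, Finset.sum_const, Finset.card_univ]
      field_simp
  have L1' : ∀ (A B : Fin k) (a : Fin d), ⟪∑ b, Φ A b, Φ B a⟫_ℂ = 1 := by
    intro A B a
    rw [sum_inner]
    by_cases h : A = B
    · subst h
      simp [hGram, Finset.sum_ite_eq']
    · simp [hGram, h, Finset.sum_const, Finset.card_univ]
      field_simp
  have L2 : ∀ (A B : Fin k), ⟪∑ a, Φ A a, ∑ b, Φ B b⟫_ℂ = (d : ℂ) := by
    intro A B
    rw [sum_inner]
    simp [L1, Finset.sum_const, Finset.card_univ]
  have hS : ∀ A : Fin k, (∑ a, Φ A a) = ∑ a, Φ A0 a := by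
    intro A
    have h0 : ⟪(∑ a, Φ A a) - ∑ a, Φ A0 a, (∑ a, Φ A a) - ∑ a, Φ A0 a⟫_ℂ = 0 := by
      rw [inner_sub_left, inner_sub_right, inner_sub_right, L2, L2, L2, L2]
      ring
    exact sub_eq_zero.mp (inner_self_eq_zero.mp h0)
  set ψ : (Fin k × Fin (d-1)) ⊕ Unit → V :=
    Sum.elim (fun p => Φ p.1 (emb p.2)) (fun _ => ∑ a, Φ A0 a) with hψdef
  -- span equality
  have hspan : Submodule.span ℂ (Set.range ψ)
      = Submodule.span ℂ (Set.range (fun p : Fin k × Fin d => Φ p.1 p.2)) := by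
    apply le_antisymm
    · rw [Submodule.span_le]
      rintro x ⟨i, rfl⟩
      rcases i with ⟨A, b⟩ | _
      · exact Submodule.subset_span ⟨(A, emb b), rfl⟩
      · exact Submodule.sum_mem _ fun a _ => Submodule.subset_span ⟨(A0, a), rfl⟩
    · rw [Submodule.span_le]
      rintro x ⟨⟨A, a⟩, rfl⟩
      simp only
      by_cases hav : (a : ℕ) < d - 1
      · have : Φ A a = ψ (Sum.inl (A, ⟨a, hav⟩)) := by
          simp [hψdef, hembdef]
        rw [this]
        exact Submodule.subset_span ⟨_, rfl⟩
      · have hval : (a : ℕ) = d - 1 := by have := a.isLt; omega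
        have hsum : Φ A a = (∑ b, Φ A0 b) - ∑ b ∈ Finset.univ.erase a, Φ A b := by
          rw [← hS A, ← Finset.sum_erase_add Finset.univ _ (Finset.mem_univ a)]
          abel
        rw [hsum]
        refine Submodule.sub_mem _ (Submodule.subset_span ⟨Sum.inr (), rfl⟩) ?_
        refine Submodule.sum_mem _ fun b hb => ?_
        have hbv : (b : ℕ) < d - 1 := by
          have hba : b ≠ a := Finset.ne_of_mem_erase hb
          have hb2 : (b : ℕ) ≠ d - 1 := fun h => hba (Fin.ext (h.trans hval.symm))
          have := b.isLt; omega
        have : Φ A b = ψ (Sum.inl (A, ⟨b, hbv⟩)) := by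
          simp [hψdef, hembdef]
        rw [this]
        exact Submodule.subset_span ⟨_, rfl⟩
  -- linear independence
  have hind : LinearIndependent ℂ ψ := by
    rw [Fintype.linearIndependent_iff]
    intro g hg
    set c : Fin k → Fin (d-1) → ℂ := fun A b => g (Sum.inl (A, b)) with hc
    set g0 : ℂ := g (Sum.inr ()) with hg0def
    set C : Fin k → ℂ := fun A => ∑ b, c A b with hCdef
    set T : ℂ := ∑ A, C A with hTdef
    have hxi : ∀ x : V,
        (∑ A, ∑ b, c A b * ⟪x, Φ A (emb b)⟫_ℂ) + g0 * ⟪x, ∑ a, Φ A0 a⟫_ℂ = 0 := by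
      intro x
      have h := congrArg (fun v => ⟪x, v⟫_ℂ) hg
      simpa [inner_sum, inner_add_right, inner_smul_right, Fintype.sum_sum_type,
        Fintype.sum_prod_type, hψdef, hc, hg0def] using h
    have heq2 : T + g0 * (d : ℂ) = 0 := by
      have h := hxi (∑ a, Φ A0 a)
      simp only [L1', L2] at h
      simpa [hTdef, hCdef] using h
    have heq1 : ∀ (B : Fin k) (b : Fin (d-1)),
        c B b + (T / d - C B / d) + g0 = 0 := by
      intro B b
      have h := hxi (Φ B (emb b))
      rw [L1] at h
      have hin : ∀ A : Fin k, (∑ a, c A a * ⟪Φ B (emb b), Φ A (emb a)⟫_ℂ)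
          = if B = A then c A b else C A / d := by
        intro A
        by_cases hBA : B = A
        · subst hBA
          simp [hGram, hemb_inj.eq_iff, mul_ite, Finset.sum_ite_eq]
        · simp only [hGram, if_neg hBA, mul_one_div, ← Finset.sum_div]; rfl
      rw [Finset.sum_congr rfl (fun A _ => hin A)] at h
      rw [← Finset.add_sum_erase _ _ (Finset.mem_univ B), if_pos rfl] at h
      rw [Finset.sum_congr rfl
        (fun A hA => if_neg (Ne.symm (Finset.ne_of_mem_erase hA)))] at h
      rw [← Finset.sum_div, Finset.sum_erase_eq_sub (Finset.mem_univ B)] at h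
      rw [sub_div] at h
      rw [← hTdef] at h
      simpa [mul_one] using h
    have hg0T : g0 = -T / (d : ℂ) := by
      field_simp
      linear_combination heq2
    have hcBb : ∀ (B : Fin k) (b : Fin (d-1)), c B b = C B / d := by
      intro B b
      have h := heq1 B b
      rw [hg0T] at h
      field_simp at h ⊢
      linear_combination h
    have hCB : ∀ B : Fin k, C B = 0 := by
      intro B
      have hsum : C B = ((d - 1 : ℕ) : ℂ) * (C B / d) := by
        conv_lhs => rw [hCdef]
        simp [hcBb, Finset.sum_const, Finset.card_univ, mul_comm]
      have hcast : ((d - 1 : ℕ) : ℂ) = (d : ℂ) - 1 := by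
        rw [Nat.cast_sub hd, Nat.cast_one]
      rw [hcast] at hsum
      field_simp at hsum
      linear_combination hsum
    have hT0 : T = 0 := by
      rw [hTdef]
      simp [hCB]
    have hg00 : g0 = 0 := by rw [hg0T, hT0]; simp
    intro i
    rcases i with ⟨A, b⟩ | ⟨⟩
    · have h := hcBb A b
      rw [hCB] at h
      simpa [hc] using h
    · exact hg00
  rw [← hspan, finrank_span_eq_card hind]
  simp [Fintype.card_sum, Fintype.card_prod]
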